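/- Let T be a finite tree and let D_1, D_2 be two orientations of T in each of which every vertex has out-degree at most 1, with unique out-degree-0 vertices r_1 and r_2 respectively. Then the set of edges on which D_1 and D_2 disagree is exactly the edge set of the unique path in T from r_1 to r_2; in particular, D_1 and D_2 orient exactly dist_T(r_1, r_2) edges differently. -/

import Mathlib

open SimpleGraph Finset

namespace Stmt14Aux

variable {V : Type*} {T : SimpleGraph V}

lemma path_length_eq (hT : T.IsTree) {u v : V} (p : T.Walk u v) (hp : p.IsPath) :
    p.length = T.dist u v := by
  obtain ⟨q, hq, hql⟩ := hT.isConnected.exists_path_of_dist u v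
  have h : (⟨p, hp⟩ : T.Path u v) = ⟨q, hq⟩ := hT.2.path_unique _ _
  rw [show p = q from congrArg Subtype.val h]
  exact hql

lemma support_dist (hT : T.IsTree) {u v : V} {p : T.Walk u v} (hp : p.IsPath) {w : V}
    (hw : w ∈ p.support) : T.dist u w + T.dist w v = T.dist u v := by
  classical
  have h1 := path_length_eq hT _ (hp.takeUntil hw)
  have h2 := path_length_eq hT _ (hp.dropUntil hw)
  have h3 := congrArg Walk.length (p.take_spec hw)
  rw [Walk.length_append, h1, h2, path_length_eq hT p hp] at h3
  exact h3

lemma adj_dist (hT : T.IsTree) (r : V) {x y : V} (h : T.Adj x y) :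
    T.dist x r = T.dist y r + 1 ∨ T.dist y r = T.dist x r + 1 := by
  obtain ⟨p, hp, hpl⟩ := hT.isConnected.exists_path_of_dist x r
  by_cases hy : y ∈ p.support
  · left
    have h1 := support_dist hT hp hy
    have hxy : T.dist x y = 1 := SimpleGraph.dist_eq_one_iff_adj.mpr h
    omega
  · right
    have hq : (Walk.cons h.symm p).IsPath := hp.cons hy
    have h2 := path_length_eq hT _ hq
    rw [Walk.length_cons, hpl] at h2
    omega

lemma orient_eq [Fintype V] (hT : T.IsTree) (o : V → V → Bool)
    (hb : ∀ x y, T.Adj x y → (o x y = true ↔ o y x = false))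
    (hdeg : ∀ x, (Finset.univ.filter (fun y => o x y = true)).card ≤ 1)
    (r : V) (hr : ∀ w, o r w = false) :
    ∀ x y, o x y = true → T.dist y r + 1 = T.dist x r := by
  classical
  suffices key : ∀ n x, T.dist x r = n → ∀ y, o x y = true → T.dist y r + 1 = n by
    intro x y hxy; exact key _ x rfl y hxy
  intro n
  induction n using Nat.strong_induction_on with
  | _ n IH =>
    intro x hx y hxy
    rcases Nat.eq_zero_or_pos n with rfl | hpos
    · have hxr : x = r := (hT.isConnected.dist_eq_zero_iff).mp hx
      subst hxr
      rw [hr y] at hxy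
      exact absurd hxy (by simp)
    · have hxr : x ≠ r := by
        intro hxr; subst hxr; rw [SimpleGraph.dist_self] at hx; omega
      obtain ⟨p, hp, hpl⟩ := hT.isConnected.exists_path_of_dist x r
      obtain ⟨z, hadj, q, rfl⟩ := Walk.exists_eq_cons_of_ne hxr p
      have hq : T.dist z r = n - 1 := by
        have hle : T.dist z r ≤ q.length := SimpleGraph.dist_le q
        have hxz : T.dist x z = 1 := SimpleGraph.dist_eq_one_iff_adj.mpr hadj
        have htri := hT.isConnected.dist_triangle (u := x) (v := z) (w := r)
        rw [Walk.length_cons] at hpl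
        omega
      by_cases hyz : y = z
      · subst hyz; omega
      · have hoz : o x z = false := by
          by_contra hoz
          have hoz' : o x z = true := by simpa using hoz
          have hsub : ({y, z} : Finset V) ⊆ Finset.univ.filter (fun w => o x w = true) := by
            intro w hw
            simp only [Finset.mem_insert, Finset.mem_singleton] at hw
            rcases hw with rfl | rfl <;> simp [hxy, hoz']
          have hc := Finset.card_le_card hsub
          rw [Finset.card_pair hyz] at hc
          have := hdeg x
          omega
        have hzx : o z x = true := (hb z x hadj.symm).mpr hoz
        have := IH (n - 1) (by omega) z hq x hzx
        omega

lemma orient_iff [Fintype V] (hT : T.IsTree) (o : V → V → Bool)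
    (hb : ∀ x y, T.Adj x y → (o x y = true ↔ o y x = false))
    (hdeg : ∀ x, (Finset.univ.filter (fun y => o x y = true)).card ≤ 1)
    (r : V) (hr : ∀ w, o r w = false)
    {x y : V} (hadj : T.Adj x y) :
    o x y = true ↔ T.dist x r = T.dist y r + 1 := by
  constructor
  · intro h
    have := orient_eq hT o hb hdeg r hr x y h
    omega
  · intro h
    cases hoxy : o x y
    · have hyx : o y x = true := by
        cases h' : o y x
        · have h2 := (hb x y hadj).mpr h'
          rw [hoxy] at h2; cases h2
        · rfl
      have := orient_eq hT o hb hdeg r hr y x hyx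
      omega
    · rfl

lemma edge_mem (hT : T.IsTree) {r1 r2 x y : V} (hadj : T.Adj x y)
    (h1 : T.dist y r1 = T.dist x r1 + 1) (h2 : T.dist x r2 = T.dist y r2 + 1)
    (p : T.Walk r1 r2) (hp : p.IsPath) : s(x, y) ∈ p.edges := by
  obtain ⟨q1, hq1, hl1⟩ := hT.isConnected.exists_path_of_dist r1 x
  obtain ⟨q2, hq2, hl2⟩ := hT.isConnected.exists_path_of_dist y r2
  have hdisj : ∀ v, v ∈ q1.support → v ∈ q2.support → False := by
    intro v hv1 hv2
    have e1 := support_dist hT hq1 hv1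
    have e2 := support_dist hT hq2 hv2
    have t1 := hT.isConnected.dist_triangle (u := y) (v := v) (w := r1)
    have t2 := hT.isConnected.dist_triangle (u := x) (v := v) (w := r2)
    have c1 : T.dist x r1 = T.dist r1 x := SimpleGraph.dist_comm
    have c2 : T.dist v r1 = T.dist r1 v := SimpleGraph.dist_comm
    have c3 : T.dist x v = T.dist v x := SimpleGraph.dist_comm
    omega
  have hW : (q1.append (Walk.cons hadj q2)).IsPath := by
    rw [Walk.isPath_def, Walk.support_append, Walk.support_cons, List.tail_cons,
      List.nodup_append]
    exact ⟨hq1.support_nodup, hq2.support_nodup, fun v hv1 w hw2 hvw => hdisj v hv1 (by subst hvw; exact hw2)⟩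
  have heq : q1.append (Walk.cons hadj q2) = p := by
    have h := hT.2.path_unique ⟨_, hW⟩ ⟨p, hp⟩
    exact congrArg Subtype.val h
  rw [← heq, Walk.edges_append, Walk.edges_cons]
  simp

end Stmt14Aux

open Stmt14Aux

/-- Let `T` be a finite tree with two orientations `D_1`, `D_2` of maximum
out-degree at most `1`, with unique out-degree-`0` vertices `r_1`, `r_2` respectively. Then the
edges on which `D_1` and `D_2` disagree are exactly the edges of the (unique) path in `T` from
`r_1` to `r_2`; in particular they disagree on exactly `dist_T(r_1, r_2)` edges (a disagreeing
edge is counted by the ordered pair giving its `D_1`-direction). -/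
theorem stmt_14 {V : Type*} [Fintype V]
    (T : SimpleGraph V) (hT : T.IsTree)
    (o1 o2 : V → V → Bool)
    (h1a : ∀ x y, o1 x y = true → T.Adj x y)
    (h1b : ∀ x y, T.Adj x y → (o1 x y = true ↔ o1 y x = false))
    (h1deg : ∀ x, (Finset.univ.filter (fun y => o1 x y = true)).card ≤ 1)
    (h2a : ∀ x y, o2 x y = true → T.Adj x y)
    (h2b : ∀ x y, T.Adj x y → (o2 x y = true ↔ o2 y x = false))
    (h2deg : ∀ x, (Finset.univ.filter (fun y => o2 x y = true)).card ≤ 1)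
    (r1 r2 : V)
    (hr1 : ∀ w, o1 r1 w = false)
    (hr1u : ∀ x, (∀ w, o1 x w = false) → x = r1)
    (hr2 : ∀ w, o2 r2 w = false)
    (hr2u : ∀ x, (∀ w, o2 x w = false) → x = r2) :
    (∀ p : T.Walk r1 r2, p.IsPath →
      ∀ x y : V, T.Adj x y → ((o1 x y ≠ o2 x y) ↔ s(x, y) ∈ p.edges)) ∧
    (Finset.univ.filter (fun q : V × V => o1 q.1 q.2 = true ∧ o2 q.2 q.1 = true)).card
      = T.dist r1 r2 := by
  classical
  have main : ∀ p : T.Walk r1 r2, p.IsPath →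
      ∀ x y : V, T.Adj x y → ((o1 x y ≠ o2 x y) ↔ s(x, y) ∈ p.edges) := by
    intro p hp x y hadj
    have i1 := orient_iff hT o1 h1b h1deg r1 hr1 hadj
    have i1' := orient_iff hT o1 h1b h1deg r1 hr1 hadj.symm
    have i2 := orient_iff hT o2 h2b h2deg r2 hr2 hadj
    have i2' := orient_iff hT o2 h2b h2deg r2 hr2 hadj.symm
    have hd1 := adj_dist hT r1 hadj
    have hd2 := adj_dist hT r2 hadj
    constructor
    · intro hne
      rcases hd1 with h1 | h1 <;> rcases hd2 with h2 | h2
      · exact absurd (by rw [i1.mpr h1, i2.mpr h2]) hne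
      · rw [Sym2.eq_swap]
        exact edge_mem hT hadj.symm h1 h2 p hp
      · exact edge_mem hT hadj h1 h2 p hp
      · have e1 : o1 x y = false := by
          cases h : o1 x y
          · rfl
          · have := i1.mp h; omega
        have e2 : o2 x y = false := by
          cases h : o2 x y
          · rfl
          · have := i2.mp h; omega
        exact absurd (e1.trans e2.symm) hne
    · intro hmem
      have hx := p.fst_mem_support_of_mem_edges hmem
      have hy := p.snd_mem_support_of_mem_edges hmem
      have ex := support_dist hT hp hx
      have ey := support_dist hT hp hy
      have c1 : T.dist x r1 = T.dist r1 x := SimpleGraph.dist_comm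
      have c2 : T.dist y r1 = T.dist r1 y := SimpleGraph.dist_comm
      rcases hd1 with h1 | h1
      · have h2 : T.dist y r2 = T.dist x r2 + 1 := by omega
        have ho1 : o1 x y = true := i1.mpr h1
        have ho2 : o2 x y = false := by
          have hyx : o2 y x = true := i2'.mpr h2
          cases h : o2 x y
          · rfl
          · have hc := (h2b x y hadj).mp h
            rw [hyx] at hc; cases hc
        rw [ho1, ho2]; simp
      · have h2 : T.dist x r2 = T.dist y r2 + 1 := by omega
        have ho2 : o2 x y = true := i2.mpr h2
        have ho1 : o1 x y = false := by
          have hyx : o1 y x = true := i1'.mpr h1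
          cases h : o1 x y
          · rfl
          · have hc := (h1b x y hadj).mp h
            rw [hyx] at hc; cases hc
        rw [ho1, ho2]; simp
  refine ⟨main, ?_⟩
  obtain ⟨p, hp, hpl⟩ := hT.isConnected.exists_path_of_dist r1 r2
  have key := main p hp
  rw [← hpl, ← Walk.length_edges, ← List.toFinset_card_of_nodup hp.edges_nodup]
  apply Finset.card_bij (fun a _ => s(a.1, a.2))
  · intro a ha
    simp only [Finset.mem_filter, Finset.mem_univ, true_and] at ha
    obtain ⟨ha1, ha2⟩ := ha
    have hadj := h1a _ _ ha1
    rw [List.mem_toFinset]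
    apply (key a.1 a.2 hadj).mp
    have h2 : o2 a.1 a.2 = false := by
      cases h : o2 a.1 a.2
      · rfl
      · have hc := (h2b _ _ hadj).mp h
        rw [ha2] at hc; cases hc
    rw [ha1, h2]; simp
  · intro a ha b hb hab
    simp only [Finset.mem_filter, Finset.mem_univ, true_and] at ha hb
    rw [Sym2.eq_iff] at hab
    rcases hab with ⟨h1, h2⟩ | ⟨h1, h2⟩
    · exact Prod.ext h1 h2
    · exfalso
      have hadj := h1a _ _ hb.1
      have hf : o1 b.2 b.1 = false := (h1b _ _ hadj).mp hb.1
      have ht : o1 b.2 b.1 = true := by rw [← h1, ← h2]; exact ha.1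
      rw [ht] at hf; cases hf
  · intro e he
    rw [List.mem_toFinset] at he
    revert he
    refine Sym2.ind (fun x y => ?_) e
    intro he
    have hadj : T.Adj x y := p.adj_of_mem_edges he
    have hne := (key x y hadj).mpr he
    cases h1 : o1 x y
    · have ho1 : o1 y x = true := (h1b y x hadj.symm).mpr h1
      have ho2 : o2 x y = true := by
        cases h : o2 x y
        · rw [h1, h] at hne; exact absurd rfl hne
        · rfl
      refine ⟨(y, x), ?_, Sym2.eq_swap⟩
      simp only [Finset.mem_filter, Finset.mem_univ, true_and]
      exact ⟨ho1, ho2⟩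
    · have ho2 : o2 x y = false := by
        cases h : o2 x y
        · rfl
        · rw [h1, h] at hne; exact absurd rfl hne
      have ho2' : o2 y x = true := (h2b y x hadj.symm).mpr ho2
      refine ⟨(x, y), ?_, rfl⟩
      simp only [Finset.mem_filter, Finset.mem_univ, true_and]
      exact ⟨h1, ho2'⟩
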